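/- Let R be a right zero semigroup with at least two elements, let S = R ∪ {1} be the monoid obtained by adjoining an identity, and for z ∈ R let σ_z = {(s,t) ∈ S×S : ∃ p, q ∈ {1,z} with ps = qt}. Then σ_z is exactly the diagonal together with the pair {1,z}, i.e., σ_z = {(s,s) : s ∈ S} ∪ {(1,z), (z,1)}; in particular each σ_z is a right congruence on S, and for z_1 ≠ z_2 in R one has σ_{z_1} ≠ σ_{z_2}. -/

import Mathlib

variable {R : Type} [Semigroup R]

/-- The right congruence `σ_z` on `S = R¹ = R ∪ {1}` (`WithOne R`):
`(s,t) ∈ σ_z` iff `ps = qt` for some `p, q ∈ {1, z}`. -/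
def σ (z : R) : WithOne R → WithOne R → Prop := fun s t =>
  ∃ p q : WithOne R, (p = 1 ∨ p = (z : WithOne R)) ∧ (q = 1 ∨ q = (z : WithOne R)) ∧
    p * s = q * t

/-- The action of `S` on the quotient `S/σ_z`, given by `[s]·u = [su]`. -/
def qact (z : R) : Quot (σ z) → WithOne R → Quot (σ z) := fun a u =>
  Quot.lift (fun s => Quot.mk (σ z) (s * u))
    (fun s t h => Quot.sound (by
      obtain ⟨p, q, hp, hq, hpq⟩ := h
      exact ⟨p, q, hp, hq, by rw [← mul_assoc, hpq, mul_assoc]⟩)) a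

lemma sigma_desc (hR : ∀ a b : R, a * b = b) (z : R) (s t : WithOne R) :
    σ z s t ↔ s = t ∨ (s = 1 ∧ t = (z : WithOne R)) ∨ (s = (z : WithOne R) ∧ t = 1) := by
  have mul1 : ∀ (p : WithOne R) (a : R), (p = 1 ∨ p = (z : WithOne R)) →
      p * (a : WithOne R) = (a : WithOne R) := by
    rintro p a (rfl | rfl)
    · rw [one_mul]
    · rw [← WithOne.coe_mul, hR]
  constructor
  · rintro ⟨p, q, hp, hq, hpq⟩
    induction s using WithOne.recOneCoe with
    | one =>
      induction t using WithOne.recOneCoe with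
      | one => exact Or.inl rfl
      | coe b =>
        rw [mul_one, mul1 q b hq] at hpq
        rcases hp with rfl | rfl
        · exact absurd hpq.symm (WithOne.coe_ne_one)
        · exact Or.inr (Or.inl ⟨rfl, by rw [← hpq]⟩)
    | coe a =>
      induction t using WithOne.recOneCoe with
      | one =>
        rw [mul_one, mul1 p a hp] at hpq
        rcases hq with rfl | rfl
        · exact absurd hpq (WithOne.coe_ne_one)
        · exact Or.inr (Or.inr ⟨hpq, rfl⟩)
      | coe b =>
        rw [mul1 p a hp, mul1 q b hq] at hpq
        exact Or.inl hpq
  · rintro (rfl | ⟨rfl, rfl⟩ | ⟨rfl, rfl⟩)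
    · exact ⟨1, 1, Or.inl rfl, Or.inl rfl, rfl⟩
    · exact ⟨(z : WithOne R), 1, Or.inr rfl, Or.inl rfl, by rw [mul_one, one_mul]⟩
    · exact ⟨1, (z : WithOne R), Or.inl rfl, Or.inr rfl, by rw [mul_one, one_mul]⟩

theorem rz_sigma_description (hR : ∀ a b : R, a * b = b) (htwo : ∃ a b : R, a ≠ b) :
    (∀ z : R, ∀ s t : WithOne R,
      σ z s t ↔ s = t ∨ (s = 1 ∧ t = (z : WithOne R)) ∨ (s = (z : WithOne R) ∧ t = 1)) ∧
    (∀ z : R, Equivalence (σ z) ∧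
      ∀ s t u : WithOne R, σ z s t → σ z (s * u) (t * u)) ∧
    (∀ z₁ z₂ : R, z₁ ≠ z₂ → σ z₁ ≠ σ z₂) := by
  refine ⟨sigma_desc hR, fun z => ⟨⟨?_, ?_, ?_⟩, ?_⟩, ?_⟩
  · intro s; exact ⟨1, 1, Or.inl rfl, Or.inl rfl, rfl⟩
  · rintro s t ⟨p, q, hp, hq, hpq⟩; exact ⟨q, p, hq, hp, hpq.symm⟩
  · intro s t u hst htu
    rw [sigma_desc hR] at hst htu ⊢
    rcases hst with rfl | ⟨rfl, rfl⟩ | ⟨rfl, rfl⟩ <;>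
      rcases htu with h | ⟨h1, h2⟩ | ⟨h1, h2⟩ <;> simp_all
  · rintro s t u ⟨p, q, hp, hq, hpq⟩
    exact ⟨p, q, hp, hq, by rw [← mul_assoc, hpq, mul_assoc]⟩
  · intro z₁ z₂ hne h
    have h1 : σ z₁ 1 (z₁ : WithOne R) := (sigma_desc hR z₁ _ _).2 (Or.inr (Or.inl ⟨rfl, rfl⟩))
    rw [h, sigma_desc hR] at h1
    rcases h1 with h1 | ⟨_, h2⟩ | ⟨h1, _⟩
    · exact WithOne.coe_ne_one h1.symm
    · exact hne (WithOne.coe_inj.mp h2)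
    · exact WithOne.coe_ne_one h1.symm
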